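/- The Euclidean volume of the distorted cross polytope C_n^c = conv{e_1, …, e_n, −(c−1)e_1, …, −(c−1)e_n} ⊂ ℝ^n equals c^n / n!. -/

import Mathlib

open MeasureTheory Finset

/-- The corner simplex `{x | x ≥ 0, ∑ x ≤ r}`. -/
def cornerSimplex (n : ℕ) (r : ℝ) : Set (Fin n → ℝ) :=
  {x | (∀ j, 0 ≤ x j) ∧ ∑ j, x j ≤ r}

lemma isCompact_cornerSimplex (n : ℕ) (r : ℝ) : IsCompact (cornerSimplex n r) := by
  have hsub : cornerSimplex n r ⊆ Set.Icc (fun _ => 0) (fun _ => r) := by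
    intro x ⟨h0, hs⟩
    constructor
    · intro j; exact h0 j
    · intro j
      calc x j ≤ ∑ i, x i := Finset.single_le_sum (fun i _ => h0 i) (mem_univ j)
        _ ≤ r := hs
  have hcl : IsClosed (cornerSimplex n r) := by
    have : cornerSimplex n r =
        (⋂ j, {x : Fin n → ℝ | 0 ≤ x j}) ∩ {x | ∑ j, x j ≤ r} := by
      ext x; simp [cornerSimplex, Set.mem_iInter]
    rw [this]
    exact (isClosed_iInter fun j => isClosed_le continuous_const (continuous_apply j)).inter
      (isClosed_le (by fun_prop) continuous_const)
  exact (isCompact_Icc).of_isClosed_subset hcl hsub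

lemma volume_cornerSimplex : ∀ (n : ℕ) (r : ℝ), 0 ≤ r →
    volume (cornerSimplex n r) = ENNReal.ofReal (r ^ n / (Nat.factorial n : ℝ)) := by
  intro n
  induction n with
  | zero =>
    intro r hr
    have h1 : cornerSimplex 0 r = Set.univ := by
      ext x; simp [cornerSimplex, hr]
    rw [h1]
    rw [show ((0:ℕ).factorial :ℝ) = 1 by norm_num, show r ^ 0 = 1 by norm_num]
    rw [MeasureTheory.volume_pi, Measure.pi_univ]
    simp
  | succ n ih =>
    intro r hr
    have hmp := (volume_preserving_piFinSuccAbove (fun _ : Fin (n + 1) => ℝ) 0)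
    set e := MeasurableEquiv.piFinSuccAbove (fun _ : Fin (n + 1) => ℝ) 0 with he
    have heapp : ∀ x : Fin (n+1) → ℝ, e x = (x 0, fun j => x j.succ) := by
      intro x
      rfl
    set T : Set (ℝ × (Fin n → ℝ)) :=
      {p | 0 ≤ p.1 ∧ p.2 ∈ cornerSimplex n (r - p.1)} with hT
    have himg : cornerSimplex (n+1) r = e ⁻¹' T := by
      ext x
      simp only [Set.mem_preimage, heapp, hT, cornerSimplex, Set.mem_setOf_eq]
      rw [Fin.sum_univ_succ]
      constructor
      · rintro ⟨h0, hs⟩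
        exact ⟨h0 0, fun j => h0 _, by linarith⟩
      · rintro ⟨h0, h1, h2⟩
        refine ⟨fun j => ?_, by linarith⟩
        rcases Fin.eq_zero_or_eq_succ j with rfl | ⟨k, rfl⟩
        · exact h0
        · exact h1 k
    have hTm : MeasurableSet T := by
      have hTeq : T = {p : ℝ × (Fin n → ℝ) | 0 ≤ p.1} ∩
          ((⋂ j, {p : ℝ × (Fin n → ℝ) | 0 ≤ p.2 j}) ∩ {p | ∑ j, p.2 j ≤ r - p.1}) := by
        ext p
        simp [hT, cornerSimplex, Set.mem_iInter, and_assoc]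
      rw [hTeq]
      refine (measurableSet_le measurable_const measurable_fst).inter
        ((MeasurableSet.iInter fun j => measurableSet_le measurable_const
          ((measurable_pi_apply j).comp measurable_snd)).inter
          (measurableSet_le (f := fun p : ℝ × (Fin n → ℝ) => ∑ j, p.2 j) (g := fun p => r - p.1) (by fun_prop) (by fun_prop)))
    have hvol : volume (cornerSimplex (n+1) r) = (volume.prod volume) T := by
      rw [himg]
      have : (volume : Measure (ℝ × (Fin n → ℝ))) = volume.prod volume := rfl
      rw [← this]
      exact hmp.measure_preimage hTm.nullMeasurableSet
    rw [hvol, Measure.prod_apply hTm]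
    have hsec : ∀ t : ℝ, (Prod.mk t ⁻¹' T) =
        if 0 ≤ t then cornerSimplex n (r - t) else ∅ := by
      intro t
      split_ifs with ht
      · ext y; simp [hT, ht]
      · ext y; simp [hT, ht]
    calc ∫⁻ t, volume (Prod.mk t ⁻¹' T)
        = ∫⁻ t, Set.indicator (Set.Icc 0 r)
            (fun t => ENNReal.ofReal ((r - t) ^ n / (Nat.factorial n : ℝ))) t := by
          apply lintegral_congr
          intro t
          rw [hsec t]
          by_cases ht : 0 ≤ t
          · by_cases htr : t ≤ r
            · rw [if_pos ht, Set.indicator_of_mem (Set.mem_Icc.2 ⟨ht, htr⟩), ih _ (by linarith)]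
            · rw [if_pos ht, Set.indicator_of_notMem (by simp [Set.mem_Icc]; intro _; linarith)]
              have : cornerSimplex n (r - t) = ∅ := by
                ext y
                simp only [cornerSimplex, Set.mem_setOf_eq, Set.mem_empty_iff_false, iff_false]
                rintro ⟨h0, hs⟩
                have : 0 ≤ ∑ j, y j := Finset.sum_nonneg fun j _ => h0 j
                linarith
              simp [this]
          · rw [if_neg ht, Set.indicator_of_notMem (by simp [Set.mem_Icc]; intro h; exact absurd h ht)]
            simp
      _ = ∫⁻ t in Set.Icc 0 r, ENNReal.ofReal ((r - t) ^ n / (Nat.factorial n : ℝ)) := by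
          rw [← lintegral_indicator measurableSet_Icc]
      _ = ENNReal.ofReal (∫ t in Set.Icc 0 r, (r - t) ^ n / (Nat.factorial n : ℝ)) := by
          rw [← ofReal_integral_eq_lintegral_ofReal]
          · apply (ContinuousOn.integrableOn_compact isCompact_Icc ?_)
            fun_prop
          · filter_upwards [ae_restrict_mem measurableSet_Icc] with t ht
            have : 0 ≤ r - t := by linarith [ht.2]
            positivity
      _ = ENNReal.ofReal (r ^ (n+1) / (Nat.factorial (n+1) : ℝ)) := by
          congr 1
          rw [MeasureTheory.integral_Icc_eq_integral_Ioc,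
            ← intervalIntegral.integral_of_le hr]
          simp only [div_eq_mul_inv]
          rw [intervalIntegral.integral_mul_const]
          rw [intervalIntegral.integral_comp_sub_left (fun u => u ^ n) r]
          rw [sub_self, sub_zero, integral_pow]
          rw [Nat.factorial_succ]
          push_cast
          field_simp
          simp

/-- The distorted cross polytope
`C_n^c = conv{e_1,…,e_n, -(c-1)e_1, …, -(c-1)e_n} ⊂ ℝ^n`. -/
noncomputable def distortedCross (n c : ℕ) : Set (Fin n → ℝ) :=
  convexHull ℝ ((Set.range fun j : Fin n => Pi.single j (1 : ℝ)) ∪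
    (Set.range fun j : Fin n => Pi.single j (-((c : ℝ) - 1))))

lemma zero_mem_distortedCross (n c : ℕ) (hn : 0 < n) (hc : 0 < c) :
    (0 : Fin n → ℝ) ∈ distortedCross n c := by
  set i0 : Fin n := ⟨0, hn⟩
  have hx : Pi.single i0 (1:ℝ) ∈ distortedCross n c :=
    subset_convexHull ℝ _ (Set.mem_union_left _ ⟨i0, rfl⟩)
  have hy : Pi.single i0 (-((c:ℝ)-1)) ∈ distortedCross n c :=
    subset_convexHull ℝ _ (Set.mem_union_right _ ⟨i0, rfl⟩)
  have hc1 : (1:ℝ) ≤ c := by exact_mod_cast hc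
  have hcpos : (0:ℝ) < c := by positivity
  have key := (convex_convexHull ℝ _) hx hy
    (div_nonneg (by linarith) hcpos.le) (by positivity : (0:ℝ) ≤ 1/(c:ℝ))
    (by rw [← add_div, sub_add_cancel, div_self hcpos.ne'] :
      ((c:ℝ)-1)/c + 1/(c:ℝ) = 1)
  have heq : (((c:ℝ)-1)/c) • (Pi.single i0 (1:ℝ) : Fin n → ℝ)
      + (1/(c:ℝ)) • (Pi.single i0 (-((c:ℝ)-1)) : Fin n → ℝ) = (0 : Fin n → ℝ) := by
    funext k
    by_cases hk : k = i0 <;> simp [Pi.single_apply, hk] <;> field_simp <;> ring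
  rwa [heq] at key

lemma mem_distortedCross_iff (n c : ℕ) (hn : 0 < n) (hc : 0 < c) (x : Fin n → ℝ) :
    x ∈ distortedCross n c ↔ ∃ a b : Fin n → ℝ, (∀ j, 0 ≤ a j) ∧ (∀ j, 0 ≤ b j) ∧
      (∑ j, a j) + (∑ j, b j) ≤ 1 ∧ ∀ j, x j = a j - ((c:ℝ)-1) * b j := by
  constructor
  · intro hx
    set T : Set (Fin n → ℝ) := {x | ∃ a b : Fin n → ℝ, (∀ j, 0 ≤ a j) ∧ (∀ j, 0 ≤ b j) ∧
      (∑ j, a j) + (∑ j, b j) ≤ 1 ∧ ∀ j, x j = a j - ((c:ℝ)-1) * b j} with hT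
    have hconv : Convex ℝ T := by
      rintro u ⟨a, b, ha, hb, hab, hu⟩ v ⟨a', b', ha', hb', hab', hv⟩ s t hs ht hst
      refine ⟨s • a + t • a', s • b + t • b', fun j => by
          have := ha j; have := ha' j; simp only [Pi.add_apply, Pi.smul_apply, smul_eq_mul]
          positivity,
        fun j => by
          have := hb j; have := hb' j; simp only [Pi.add_apply, Pi.smul_apply, smul_eq_mul]
          positivity, ?_, ?_⟩
      · simp only [Pi.add_apply, Pi.smul_apply, smul_eq_mul, Finset.sum_add_distrib,
          ← Finset.mul_sum]
        nlinarith [Finset.sum_nonneg fun j (_ : j ∈ univ) => ha j,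
          Finset.sum_nonneg fun j (_ : j ∈ univ) => hb j,
          Finset.sum_nonneg fun j (_ : j ∈ univ) => ha' j,
          Finset.sum_nonneg fun j (_ : j ∈ univ) => hb' j]
      · intro j
        simp only [Pi.add_apply, Pi.smul_apply, smul_eq_mul, hu j, hv j]
        ring
    have hsub : ((Set.range fun j : Fin n => Pi.single j (1 : ℝ)) ∪
        (Set.range fun j : Fin n => Pi.single j (-((c : ℝ) - 1)))) ⊆ T := by
      rintro y (⟨j, rfl⟩ | ⟨j, rfl⟩)
      · refine ⟨Pi.single j 1, 0, fun k => ?_, fun k => le_refl _, ?_, fun k => ?_⟩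
        · by_cases hk : k = j <;> simp [Pi.single_apply, hk]
        · simp [Finset.sum_pi_single]
        · simp [Pi.single_apply]
      · refine ⟨0, Pi.single j 1, fun k => le_refl _, fun k => ?_, ?_, fun k => ?_⟩
        · by_cases hk : k = j <;> simp [Pi.single_apply, hk]
        · simp [Finset.sum_pi_single]
        · by_cases hk : k = j <;> simp [Pi.single_apply, hk]
    exact convexHull_min hsub hconv hx
  · rintro ⟨a, b, ha, hb, hab, hx⟩
    have h0 : (0 : Fin n → ℝ) ∈ distortedCross n c := zero_mem_distortedCross n c hn hc
    set t0 : ℝ := 1 - (∑ j, a j) - (∑ j, b j) with ht0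
    set w : Sum (Fin n) (Sum (Fin n) Unit) → ℝ := Sum.elim a (Sum.elim b fun _ => t0) with hw
    set z : Sum (Fin n) (Sum (Fin n) Unit) → (Fin n → ℝ) := Sum.elim (fun j => Pi.single j (1:ℝ))
      (Sum.elim (fun j => Pi.single j (-((c:ℝ)-1))) fun _ => 0) with hz
    have hwnn : ∀ i ∈ Finset.univ, 0 ≤ w i := by
      rintro (j | j | u) _
      · exact ha j
      · exact hb j
      · simpa [hw, ht0] using by linarith
    have hwsum : ∑ i, w i = 1 := by
      simp only [hw, Fintype.sum_sum_type, Sum.elim_inl, Sum.elim_inr, ht0,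
        Finset.sum_const, Finset.card_univ, Fintype.card_unit, one_smul, smul_eq_mul]
      ring
    have hzmem : ∀ i ∈ Finset.univ, z i ∈ distortedCross n c := by
      rintro (j | j | u) _
      · exact subset_convexHull ℝ _ (Set.mem_union_left _ ⟨j, rfl⟩)
      · exact subset_convexHull ℝ _ (Set.mem_union_right _ ⟨j, rfl⟩)
      · exact h0
    have hcomb := (convex_convexHull ℝ _).sum_mem hwnn hwsum hzmem
    have hxc : ∑ i, w i • z i = x := by
      funext k
      simp only [Finset.sum_apply, Pi.smul_apply, smul_eq_mul, hw, hz,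
        Fintype.sum_sum_type]
      simp only [Sum.elim_inl, Sum.elim_inr, Pi.single_apply, mul_ite, mul_one, mul_zero,
        Finset.sum_ite_eq, Finset.mem_univ, if_true, Pi.zero_apply, hx k]
      simp [ht0]
      ring
    rwa [hxc] at hcomb

noncomputable def dvec (n c : ℕ) (s : Finset (Fin n)) : Fin n → ℝ :=
  fun j => if j ∈ s then -((c:ℝ)-1) else 1

noncomputable def dmap (n c : ℕ) (s : Finset (Fin n)) : (Fin n → ℝ) →ₗ[ℝ] (Fin n → ℝ) :=
  Matrix.toLin' (Matrix.diagonal (dvec n c s))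

lemma dmap_apply (n c : ℕ) (s : Finset (Fin n)) (y : Fin n → ℝ) :
    dmap n c s y = fun j => dvec n c s j * y j := by
  funext j
  simp [dmap, Matrix.toLin'_apply, Matrix.mulVec_diagonal]

lemma abs_det_dmap (n c : ℕ) (hc : 0 < c) (s : Finset (Fin n)) :
    |LinearMap.det (dmap n c s)| = ((c:ℝ) - 1) ^ s.card := by
  have hc1 : (1:ℝ) ≤ c := by exact_mod_cast hc
  rw [dmap, LinearMap.det_toLin', Matrix.det_diagonal, Finset.abs_prod]
  rw [show ((c:ℝ) - 1) ^ s.card = ∏ j, (if j ∈ s then ((c:ℝ)-1) else 1) by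
    rw [Finset.prod_ite, Finset.prod_const, Finset.prod_const_one, mul_one]
    congr 1
    simp [Finset.filter_mem_eq_inter]]
  apply Finset.prod_congr rfl
  intro j _
  by_cases hj : j ∈ s <;> simp [dvec, hj, abs_of_nonneg, abs_of_nonpos] <;>
    rw [abs_of_nonpos (by linarith)] <;> ring

lemma distortedCross_eq_iUnion (n c : ℕ) (hn : 0 < n) (hc : 0 < c) :
    distortedCross n c = ⋃ s : Finset (Fin n), dmap n c s '' cornerSimplex n 1 := by
  have hc1 : (1:ℝ) ≤ c := by exact_mod_cast hc
  ext x
  rw [mem_distortedCross_iff n c hn hc x, Set.mem_iUnion]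
  constructor
  · rintro ⟨a, b, ha, hb, hab, hx⟩
    classical
    refine ⟨Finset.univ.filter (fun j => x j < 0),
      fun j => if x j < 0 then -(x j)/((c:ℝ)-1) else x j, ⟨fun j => ?_, ?_⟩, ?_⟩
    · by_cases hj : x j < 0
      · have hbj := hb j
        have haj := ha j
        have h1 : ((c:ℝ)-1) * b j > 0 := by rw [hx j] at hj; linarith
        have hcgt : (0:ℝ) < (c:ℝ) - 1 := by
          by_contra h
          push_neg at h
          nlinarith
        simp only [if_pos hj]
        have : -(x j) ≥ 0 := by linarith
        positivity
      · simp only [if_neg hj]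
        push_neg at hj
        exact hj
    · have hle : ∀ j, (if x j < 0 then -(x j)/((c:ℝ)-1) else x j) ≤ a j + b j := by
        intro j
        have hbj := hb j
        have haj := ha j
        by_cases hj : x j < 0
        · have h1 : ((c:ℝ)-1) * b j > 0 := by rw [hx j] at hj; linarith
          have hcgt : (0:ℝ) < (c:ℝ) - 1 := by
            by_contra h
            push_neg at h
            nlinarith
          rw [if_pos hj, div_le_iff₀ hcgt, hx j]
          nlinarith
        · rw [if_neg hj, hx j]
          nlinarith
      calc ∑ j, (if x j < 0 then -(x j)/((c:ℝ)-1) else x j)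
          ≤ ∑ j, (a j + b j) := Finset.sum_le_sum fun j _ => hle j
        _ = (∑ j, a j) + (∑ j, b j) := Finset.sum_add_distrib
        _ ≤ 1 := hab
    · rw [dmap_apply]
      funext j
      simp only [dvec, Finset.mem_filter, Finset.mem_univ, true_and]
      by_cases hj : x j < 0
      · have hbj := hb j
        have haj := ha j
        have h1 : ((c:ℝ)-1) * b j > 0 := by rw [hx j] at hj; linarith
        have hcgt : (0:ℝ) < (c:ℝ) - 1 := by
          by_contra h
          push_neg at h
          nlinarith
        rw [if_pos hj, if_pos hj]
        field_simp
      · rw [if_neg hj, if_neg hj, one_mul]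
  · rintro ⟨s, y, ⟨hy0, hy1⟩, rfl⟩
    classical
    refine ⟨fun j => if j ∈ s then 0 else y j, fun j => if j ∈ s then y j else 0,
      fun j => by by_cases hj : j ∈ s <;> simp [hj, hy0 j],
      fun j => by by_cases hj : j ∈ s <;> simp [hj, hy0 j], ?_, fun j => ?_⟩
    · rw [← Finset.sum_add_distrib]
      calc ∑ j, ((if j ∈ s then 0 else y j) + if j ∈ s then y j else 0)
          = ∑ j, y j := Finset.sum_congr rfl fun j _ => by by_cases hj : j ∈ s <;> simp [hj]
        _ ≤ 1 := hy1
    · rw [dmap_apply]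
      simp only [dvec]
      by_cases hj : j ∈ s <;> simp [hj] <;> ring

/-- The Euclidean volume of the distorted cross polytope `C_n^c` equals `c^n / n!`. -/
theorem distortedCross_volume (n c : ℕ) (hn : 0 < n) (hc : 0 < c) :
    MeasureTheory.volume (distortedCross n c)
      = ENNReal.ofReal ((c : ℝ) ^ n / (Nat.factorial n : ℝ)) := by
  classical
  have hc1 : (1:ℝ) ≤ c := by exact_mod_cast hc
  rw [distortedCross_eq_iUnion n c hn hc]
  have hcompact : ∀ s : Finset (Fin n), IsCompact (dmap n c s '' cornerSimplex n 1) := fun s =>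
    (isCompact_cornerSimplex n 1).image (dmap n c s).continuous_of_finiteDimensional
  have hnm : ∀ s : Finset (Fin n),
      NullMeasurableSet (dmap n c s '' cornerSimplex n 1) volume := fun s =>
    ((hcompact s).isClosed.measurableSet).nullMeasurableSet
  have hdisj : Pairwise (Function.onFun (AEDisjoint volume)
      fun s : Finset (Fin n) => dmap n c s '' cornerSimplex n 1) := by
    intro s t hst
    obtain ⟨j, hj⟩ : ∃ j, (j ∈ s ∧ j ∉ t) ∨ (j ∉ s ∧ j ∈ t) := by
      by_contra h
      push_neg at h
      exact hst (Finset.ext fun j => by have := h j; tauto)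
    have key : ∀ (u v : Finset (Fin n)), j ∈ u → j ∉ v →
        (dmap n c u '' cornerSimplex n 1) ∩ (dmap n c v '' cornerSimplex n 1)
          ⊆ {x : Fin n → ℝ | x j = 0} := by
      rintro u v hu hv x ⟨⟨y, hy, rfl⟩, ⟨z, hz, hxz⟩⟩
      have h1 : dmap n c u y j ≤ 0 := by
        rw [dmap_apply]
        simp only [dvec, if_pos hu]
        nlinarith [hy.1 j]
      have h2 : 0 ≤ dmap n c u y j := by
        rw [← hxz, dmap_apply]
        simp only [dvec, if_neg hv, one_mul]
        exact hz.1 j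
      exact le_antisymm h1 h2
    have hnull : volume {x : Fin n → ℝ | x j = 0} = 0 := by
      rw [MeasureTheory.volume_pi]
      exact Measure.pi_hyperplane _ j 0
    have hsub : (dmap n c s '' cornerSimplex n 1) ∩ (dmap n c t '' cornerSimplex n 1)
        ⊆ {x : Fin n → ℝ | x j = 0} := by
      rcases hj with ⟨h1, h2⟩ | ⟨h1, h2⟩
      · exact key s t h1 h2
      · rw [Set.inter_comm]
        exact key t s h2 h1
    exact measure_mono_null hsub hnull
  rw [measure_iUnion₀ hdisj hnm, tsum_fintype]
  have hP : ∀ s : Finset (Fin n), volume (dmap n c s '' cornerSimplex n 1)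
      = ENNReal.ofReal (((c:ℝ)-1)^s.card * (1 / (Nat.factorial n : ℝ))) := by
    intro s
    rw [Measure.addHaar_image_linearMap, abs_det_dmap n c hc,
      volume_cornerSimplex n 1 zero_le_one]
    rw [← ENNReal.ofReal_mul (pow_nonneg (by linarith) _)]
    norm_num
  simp_rw [hP]
  rw [← ENNReal.ofReal_sum_of_nonneg (fun s _ => mul_nonneg (pow_nonneg (by linarith) _) (by positivity))]
  congr 1
  rw [← Finset.sum_mul]
  have hsum : ∑ s : Finset (Fin n), ((c:ℝ)-1)^s.card = (c:ℝ) ^ n := by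
    have hb := Finset.prod_add (fun _ : Fin n => (c:ℝ)-1) (fun _ => (1:ℝ)) Finset.univ
    simp only [Finset.prod_const, Finset.prod_const_one, one_pow, mul_one, sub_add_cancel,
      Finset.card_univ, Fintype.card_fin] at hb
    rw [← Finset.powerset_univ]
    exact hb.symm
  rw [hsum]
  ring
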